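/- Let 𝒜 be an abelian category and (J^{p,•})_{p≥0} a complex homotopically simplicial object: a family of ℤ-graded objects with morphisms d(α) : J^{s(α),•} → J^{b(α),•}[1−|α|] indexed by injective monotone maps α : [0,s(α)] → [0,b(α)], satisfying Σ_{α=βγ} d(β)d(γ) = 0 for every α. Assume each J^{p,q} vanishes for q below a uniform bound. Then the total object s(J)^n := ⊕_{p+q=n} J^{p,q} with differential d^n := Σ d(α) restricted appropriately is a complex, i.e. d^{n+1} ∘ d^n = 0. -/

import Mathlib

open CategoryTheory CategoryTheory.Limits

attribute [local instance] Classical.propDecidable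

/-- Arrows of the simplicial category: strictly monotone (injective monotone) maps
`[0, a-1] → [0, a'-1]`, encoded as strictly monotone maps `Fin a → Fin a'`. -/
abbrev SimplexArr (a a' : ℕ) : Type := {f : Fin a → Fin a' // StrictMono f}

noncomputable instance (a a' : ℕ) : Fintype (SimplexArr a a') := Subtype.fintype _

/-- The total object `s(J)^n = ⊕_{p+q=n} J^{p,q}` of a homotopically simplicial complex
whose rows vanish in degrees `< q₀` (so only `p ≤ n - q₀` contributes). -/
noncomputable def totalObj {𝒜 : Type*} [Category 𝒜] [Preadditive 𝒜]
    [Limits.HasFiniteBiproducts 𝒜] (J : ℕ → ℤ → 𝒜) (q₀ n : ℤ) : 𝒜 :=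
  ⨁ fun p : Fin ((n - q₀).toNat + 1) => J p (n - ((p : ℕ) : ℤ))

/-- The total differential `d^n = Σ_α d(α)` of a homotopically simplicial complex. -/
noncomputable def totalD {𝒜 : Type*} [Category 𝒜] [Preadditive 𝒜]
    [Limits.HasFiniteBiproducts 𝒜] (J : ℕ → ℤ → 𝒜)
    (d : ∀ p p' : ℕ, SimplexArr (p + 1) (p' + 1) → ∀ q : ℤ,
      (J p q ⟶ J p' (q + 1 - ((p' : ℤ) - (p : ℤ)))))
    (q₀ n : ℤ) : totalObj J q₀ n ⟶ totalObj J q₀ (n + 1) :=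
  biproduct.matrix fun p p' =>
    (∑ α : SimplexArr ((p : ℕ) + 1) ((p' : ℕ) + 1), d p p' α (n - ((p : ℕ) : ℤ))) ≫
      eqToHom (congrArg (J (p' : ℕ)) (by ring))

private lemma simplexArr_empty {a a' : ℕ} (h : a' < a) : IsEmpty (SimplexArr a a') :=
  ⟨fun f => by
    have := Fintype.card_le_of_injective f.1 f.2.injective
    simp only [Fintype.card_fin] at this
    omega⟩

private lemma dcast {𝒜 : Type*} [Category 𝒜] [Preadditive 𝒜]
    (J : ℕ → ℤ → 𝒜)
    (d : ∀ p p' : ℕ, SimplexArr (p + 1) (p' + 1) → ∀ q : ℤ,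
      (J p q ⟶ J p' (q + 1 - ((p' : ℤ) - (p : ℤ)))))
    (p p' : ℕ) (α : SimplexArr (p + 1) (p' + 1)) {q q' : ℤ} (h : q = q')
    (h1 : J p q = J p q')
    (h2 : J p' (q + 1 - ((p' : ℤ) - (p : ℤ))) = J p' (q' + 1 - ((p' : ℤ) - (p : ℤ))))
    {Z : 𝒜} (g : J p' (q' + 1 - ((p' : ℤ) - (p : ℤ))) ⟶ Z) :
    eqToHom h1 ≫ d p p' α q' ≫ g = d p p' α q ≫ eqToHom h2 ≫ g := by
  subst h; simp

/-- The sum over all pairs of composable arrows through level `m` of the double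
differentials, as in the relation `hrel` but with no factorization constraint. -/
private noncomputable def Hm {𝒜 : Type*} [Category 𝒜] [Preadditive 𝒜]
    (J : ℕ → ℤ → 𝒜)
    (d : ∀ p p' : ℕ, SimplexArr (p + 1) (p' + 1) → ∀ q : ℤ,
      (J p q ⟶ J p' (q + 1 - ((p' : ℤ) - (p : ℤ)))))
    (p p'' : ℕ) (q : ℤ) (m : ℕ) :
    J p q ⟶ J p'' (q + 2 - ((p'' : ℤ) - (p : ℤ))) :=
  ∑ fg : SimplexArr (p + 1) (m + 1) × SimplexArr (m + 1) (p'' + 1),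
    d p m fg.1 q ≫ d m p'' fg.2 (q + 1 - ((m : ℤ) - (p : ℤ))) ≫
      eqToHom (congrArg (J p'')
        (by ring :
          (q + 1 - ((m : ℤ) - (p : ℤ))) + 1 - ((p'' : ℤ) - (m : ℤ)) =
            q + 2 - ((p'' : ℤ) - (p : ℤ))))

theorem stmt18 {𝒜 : Type*} [Category 𝒜] [Preadditive 𝒜] [Limits.HasFiniteBiproducts 𝒜]
    (J : ℕ → ℤ → 𝒜)
    (d : ∀ p p' : ℕ, SimplexArr (p + 1) (p' + 1) → ∀ q : ℤ,
      (J p q ⟶ J p' (q + 1 - ((p' : ℤ) - (p : ℤ)))))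
    (q₀ : ℤ) (hbound : ∀ (p : ℕ) (q : ℤ), q < q₀ → Limits.IsZero (J p q))
    (hrel : ∀ (p p' : ℕ) (α : SimplexArr (p + 1) (p' + 1)) (q : ℤ),
      (∑ m ∈ Finset.Icc p p',
        ∑ fg : {x : SimplexArr (p + 1) (m + 1) × SimplexArr (m + 1) (p' + 1) //
            x.2.1 ∘ x.1.1 = α.1},
          d p m fg.1.1 q ≫ d m p' fg.1.2 (q + 1 - ((m : ℤ) - (p : ℤ))) ≫
            eqToHom (congrArg (J p')
              (by ring :
                (q + 1 - ((m : ℤ) - (p : ℤ))) + 1 - ((p' : ℤ) - (m : ℤ)) =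
                  q + 2 - ((p' : ℤ) - (p : ℤ))))) = 0) :
    ∀ n : ℤ, totalD J d q₀ n ≫ totalD J d q₀ (n + 1) = 0 := by
  intro n
  dsimp only [totalD, totalObj]
  apply biproduct.hom_ext; intro p''
  apply biproduct.hom_ext'; intro p
  simp only [totalD, Category.assoc, biproduct.matrix_π, biproduct.ι_matrix_assoc,
    biproduct.lift_desc, zero_comp, comp_zero]
  have key : ∀ m : ℕ,
      (∑ α : SimplexArr ((p : ℕ) + 1) (m + 1), d p m α (n - ((p : ℕ) : ℤ))) ≫
        eqToHom (congrArg (J m)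
          (show n - ((p : ℕ) : ℤ) + 1 - ((m : ℤ) - ((p : ℕ) : ℤ)) = n + 1 - (m : ℤ) by ring)) ≫
        (∑ β : SimplexArr (m + 1) ((p'' : ℕ) + 1), d m p'' β (n + 1 - (m : ℤ))) ≫
        eqToHom (congrArg (J (p'' : ℕ))
          (show n + 1 - (m : ℤ) + 1 - (((p'' : ℕ) : ℤ) - (m : ℤ)) = n + 1 + 1 - ((p'' : ℕ) : ℤ) by
            ring)) =
      Hm J d p p'' (n - ((p : ℕ) : ℤ)) m ≫
        eqToHom (congrArg (J (p'' : ℕ))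
          (show (n - ((p : ℕ) : ℤ)) + 2 - (((p'' : ℕ) : ℤ) - ((p : ℕ) : ℤ)) =
              n + 1 + 1 - ((p'' : ℕ) : ℤ) by ring)) := by
    intro m
    rw [Hm]
    simp only [Preadditive.sum_comp, Preadditive.comp_sum, Category.assoc,
      Fintype.sum_prod_type]
    rw [Finset.sum_comm]
    refine Finset.sum_congr rfl fun α _ => Finset.sum_congr rfl fun β _ => ?_
    congr 1
    rw [dcast J d m p'' β
      (show n - ((p : ℕ) : ℤ) + 1 - ((m : ℤ) - ((p : ℕ) : ℤ)) = n + 1 - (m : ℤ) by ring)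
      (congrArg (J m) (by ring)) (congrArg (J (p'' : ℕ)) (by ring))]
    simp [eqToHom_trans]
  -- terms with `m` outside `[p, p'']` vanish: no strictly monotone maps exist
  have hzero_lo : ∀ m : ℕ, m ∉ Finset.Icc (p : ℕ) (p'' : ℕ) →
      Hm J d p p'' (n - ((p : ℕ) : ℤ)) m = 0 := by
    intro m hm
    rw [Finset.mem_Icc] at hm
    push_neg at hm
    rw [Hm]
    rcases lt_or_ge m p with h | h
    · have : IsEmpty (SimplexArr ((p : ℕ) + 1) (m + 1)) := simplexArr_empty (by omega)
      rw [Finset.univ_eq_empty, Finset.sum_empty]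
    · have : IsEmpty (SimplexArr (m + 1) ((p'' : ℕ) + 1)) := simplexArr_empty (by
        have := hm h; omega)
      rw [Finset.univ_eq_empty, Finset.sum_empty]
  -- terms with `m` too large vanish: the intermediate object is zero
  have hzero_hi : ∀ m : ℕ, (n + 1 - q₀).toNat + 1 ≤ m →
      Hm J d p p'' (n - ((p : ℕ) : ℤ)) m = 0 := by
    intro m hm
    have hdeg : (n - ((p : ℕ) : ℤ)) + 1 - ((m : ℤ) - ((p : ℕ) : ℤ)) < q₀ := by
      have := Int.self_le_toNat (n + 1 - q₀); omega
    rw [Hm]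
    refine Finset.sum_eq_zero fun fg _ => ?_
    rw [(hbound m _ hdeg).eq_zero_of_src (d m p'' fg.2 _), zero_comp, comp_zero]
  -- sum over `Icc p p''` vanishes by the relations, after fibering over composites
  have hIcc : ∑ m ∈ Finset.Icc (p : ℕ) (p'' : ℕ), Hm J d p p'' (n - ((p : ℕ) : ℤ)) m = 0 := by
    have hfib : ∀ m : ℕ, Hm J d p p'' (n - ((p : ℕ) : ℤ)) m =
        ∑ γ : SimplexArr ((p : ℕ) + 1) ((p'' : ℕ) + 1),
          ∑ fg : {x : SimplexArr ((p : ℕ) + 1) (m + 1) ×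
              SimplexArr (m + 1) ((p'' : ℕ) + 1) // x.2.1 ∘ x.1.1 = γ.1},
            d p m fg.1.1 (n - ((p : ℕ) : ℤ)) ≫
              d m p'' fg.1.2 ((n - ((p : ℕ) : ℤ)) + 1 - ((m : ℤ) - ((p : ℕ) : ℤ))) ≫
              eqToHom (congrArg (J (p'' : ℕ))
                (by ring :
                  ((n - ((p : ℕ) : ℤ)) + 1 - ((m : ℤ) - ((p : ℕ) : ℤ))) + 1 -
                      (((p'' : ℕ) : ℤ) - (m : ℤ)) =
                    (n - ((p : ℕ) : ℤ)) + 2 - (((p'' : ℕ) : ℤ) - ((p : ℕ) : ℤ)))) := by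
      intro m
      rw [Hm, ← Fintype.sum_fiberwise
        (fun fg : SimplexArr ((p : ℕ) + 1) (m + 1) × SimplexArr (m + 1) ((p'' : ℕ) + 1) =>
          (⟨fg.2.1 ∘ fg.1.1, fg.2.2.comp fg.1.2⟩ : SimplexArr ((p : ℕ) + 1) ((p'' : ℕ) + 1)))]
      refine Finset.sum_congr rfl fun γ _ => ?_
      exact Fintype.sum_equiv
        (Equiv.subtypeEquivRight fun x => ⟨fun h => congrArg Subtype.val h, fun h => Subtype.ext h⟩)
        _ _ (fun fg => rfl)
    rw [Finset.sum_congr rfl fun m _ => hfib m, Finset.sum_comm]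
    exact Finset.sum_eq_zero fun γ _ => hrel p p'' γ (n - ((p : ℕ) : ℤ))
  have hsum : (∑ x : Fin ((n + 1 - q₀).toNat + 1), Hm J d p p'' (n - ((p : ℕ) : ℤ)) ↑x) = 0 := by
    rw [Fin.sum_univ_eq_sum_range (fun m => Hm J d p p'' (n - ((p : ℕ) : ℤ)) m)]
    have e1 : ∑ m ∈ Finset.range ((n + 1 - q₀).toNat + 1), Hm J d p p'' (n - ((p : ℕ) : ℤ)) m =
        ∑ m ∈ Finset.range ((n + 1 - q₀).toNat + 1) ∪ Finset.Icc (p : ℕ) (p'' : ℕ),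
          Hm J d p p'' (n - ((p : ℕ) : ℤ)) m :=
      Finset.sum_subset Finset.subset_union_left fun x hx hx' =>
        hzero_hi x (by simpa [Finset.mem_range, not_lt] using hx')
    have e2 : ∑ m ∈ Finset.Icc (p : ℕ) (p'' : ℕ), Hm J d p p'' (n - ((p : ℕ) : ℤ)) m =
        ∑ m ∈ Finset.range ((n + 1 - q₀).toNat + 1) ∪ Finset.Icc (p : ℕ) (p'' : ℕ),
          Hm J d p p'' (n - ((p : ℕ) : ℤ)) m :=
      Finset.sum_subset Finset.subset_union_right fun x hx hx' => hzero_lo x hx'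
    rw [e1, ← e2, hIcc]
  refine Eq.trans (Finset.sum_congr rfl fun (x : Fin ((n + 1 - q₀).toNat + 1)) _ => key ↑x) ?_
  rw [← Preadditive.sum_comp, hsum, zero_comp]
  erw [zero_comp, comp_zero]
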